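/- arXiv:2108.10756 — 2 statements merged into one kernel-verified Lean document; each statement's English description precedes it below -/
import Mathlib

section
/- Let n ≥ 1 be an integer and let λ be a real number with λ ≠ 0 and λ ≠ 1. Then y(n-1,λ) + (λ-1)·y(n,λ) = (1/(λ^{n+1}·n!)) · Σ_{j=0}^{n} B_j · S₁(n,j). -/
open Polynomial Finset

/-- The numbers `y(n,λ)` from the paper:
`y(n,λ) = ∑_{j=0}^{n} (-1)^n / ((j+1) · λ^{j+1} · (λ-1)^{n+1-j})`. -/
noncomputable def ynum (n : ℕ) (l : ℝ) : ℝ :=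
  ∑ j ∈ Finset.range (n + 1),
    (-1 : ℝ) ^ n / ((j + 1) * l ^ (j + 1) * (l - 1) ^ (n + 1 - j))

/-- The signed Stirling numbers of the first kind, defined by the recurrence
`S₁(n+1,k) = S₁(n,k-1) - n·S₁(n,k)`, equivalently by
`∑_{k=0}^{n} S₁(n,k)·x^k = x·(x-1)···(x-n+1)`. -/
def S1 : ℕ → ℕ → ℤ
  | 0, 0 => 1
  | 0, _ + 1 => 0
  | n + 1, 0 => -(n : ℤ) * S1 n 0
  | n + 1, k + 1 => S1 n k - (n : ℤ) * S1 n (k + 1)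

lemma S1_coeff (n : ℕ) : ∀ k, (descPochhammer ℚ n).coeff k = (S1 n k : ℚ) := by
  induction n with
  | zero =>
    intro k
    cases k with
    | zero => simp [S1]
    | succ k => simp [S1, coeff_one, Nat.succ_ne_zero]
  | succ n ih =>
    intro k
    have hrw : descPochhammer ℚ (n + 1)
        = descPochhammer ℚ n * X - (n : ℚ[X]) * descPochhammer ℚ n := by
      rw [descPochhammer_succ_right]; ring
    have hc : ((n : ℚ[X]) * descPochhammer ℚ n).coeff k
        = (n : ℚ) * (descPochhammer ℚ n).coeff k := by
      rw [← C_eq_natCast, coeff_C_mul]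
    cases k with
    | zero =>
      rw [hrw, coeff_sub, hc, ih]
      simp [S1, coeff_mul_X_zero]
    | succ k =>
      rw [hrw, coeff_sub, hc, coeff_mul_X, ih, ih]
      show _ = ((S1 n k - (n : ℤ) * S1 n (k+1) : ℤ) : ℚ)
      push_cast
      ring

/-- The umbral Bernoulli functional. -/
noncomputable def Lb (p : ℚ[X]) : ℚ := p.sum fun k a => a * _root_.bernoulli k

lemma Lb_add (p q : ℚ[X]) : Lb (p + q) = Lb p + Lb q := by
  unfold Lb
  rw [Polynomial.sum_add_index] <;> intros <;> ring

lemma Lb_smul (a : ℚ) (p : ℚ[X]) : Lb (a • p) = a * Lb p := by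
  unfold Lb
  rw [Polynomial.sum_smul_index p a _ (fun i => by ring)]
  rw [Polynomial.sum, Polynomial.sum, Finset.mul_sum]
  exact Finset.sum_congr rfl fun i _ => by ring

lemma Lb_range (p : ℚ[X]) (m : ℕ) (h : p.natDegree < m) :
    Lb p = ∑ k ∈ Finset.range m, p.coeff k * _root_.bernoulli k := by
  unfold Lb
  exact Polynomial.sum_over_range' p (fun n => by ring) m h

lemma Lb_key (p : ℚ[X]) : Lb (p.comp (X + 1)) = Lb p + p.coeff 1 := by
  induction p using Polynomial.induction_on' with
  | add p q hp hq =>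
    rw [add_comp, Lb_add, hp, hq, Lb_add, coeff_add]; ring
  | monomial n a =>
    rw [← smul_X_eq_monomial, smul_comp, X_pow_comp, Lb_smul, Lb_smul]
    have h1 : Lb ((X + 1 : ℚ[X]) ^ n) = _root_.bernoulli n + (if n = 1 then 1 else 0) := by
      have hdeg : ((X + 1 : ℚ[X]) ^ n).natDegree < n + 1 := by
        calc ((X + 1 : ℚ[X]) ^ n).natDegree ≤ n * (X + 1 : ℚ[X]).natDegree :=
          natDegree_pow_le
        _ ≤ n * 1 := by gcongr; simpa using (natDegree_X_add_C (1:ℚ)).le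
        _ < n + 1 := by omega
      rw [Lb_range _ (n+1) hdeg]
      simp only [coeff_X_add_one_pow]
      rw [Finset.sum_range_succ, _root_.sum_bernoulli]
      simp [add_comm]
    have h2 : Lb ((X : ℚ[X]) ^ n) = _root_.bernoulli n := by
      have : ((X : ℚ[X]) ^ n) = Polynomial.monomial n 1 := by
        simp [← smul_X_eq_monomial]
      rw [this]
      unfold Lb
      rw [Polynomial.sum_monomial_index _ _ (by ring)]
      ring
    rw [h1, h2]
    simp only [coeff_smul, smul_eq_mul]
    rw [coeff_X_pow]
    rcases eq_or_ne n 1 with h | h <;> simp [h, eq_comm] <;> ring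

lemma S1_zero (n : ℕ) (hn : 1 ≤ n) : S1 n 0 = 0 := by
  induction n with
  | zero => omega
  | succ n ih =>
    cases n with
    | zero => simp [S1]
    | succ m => rw [S1, ih (by omega), mul_zero]

lemma S1_one (n : ℕ) : S1 (n + 1) 1 = (-1) ^ n * n.factorial := by
  induction n with
  | zero => simp [S1]
  | succ n ih =>
    rw [S1, ih, S1_zero (n + 1) (by omega)]
    push_cast [Nat.factorial_succ]
    ring

lemma bernoulli_S1_sum (n : ℕ) :
    ∑ k ∈ Finset.range (n + 1), (_root_.bernoulli k) * (S1 n k : ℚ) =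
      (-1) ^ n * n.factorial / (n + 1) := by
  set p := descPochhammer ℚ n with hp
  set q := descPochhammer ℚ (n + 1) with hq
  have hqc : q.comp (X + 1) = (X + 1) * p := by
    rw [hq, descPochhammer_succ_left, mul_comp, X_comp, comp_assoc]
    have hx : ((X : ℚ[X]) - 1).comp (X + 1) = X := by
      simp [sub_comp]
    rw [hx, comp_X]
  have hring : q.comp (X + 1) = q + ((n : ℚ) + 1) • p := by
    rw [hqc, hq, descPochhammer_succ_right, smul_eq_C_mul]
    simp only [map_add, map_one, map_natCast]
    ring
  have hkey := Lb_key q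
  rw [hring, Lb_add, Lb_smul] at hkey
  have hco : q.coeff 1 = (-1) ^ n * n.factorial := by
    rw [hq, S1_coeff, S1_one]; push_cast; ring
  have hLp : Lb p = (-1) ^ n * n.factorial / (n + 1) := by
    have hn1 : ((n : ℚ) + 1) ≠ 0 := by positivity
    field_simp
    nlinarith [hkey, hco]
  have hdeg : p.natDegree < n + 1 := by rw [hp, descPochhammer_natDegree]; omega
  rw [← hLp, Lb_range p (n + 1) hdeg]
  apply Finset.sum_congr rfl
  intro k _
  rw [hp, S1_coeff]; ring

theorem stmt_4 (n : ℕ) (hn : 1 ≤ n) (l : ℝ) (hl0 : l ≠ 0) (hl1 : l ≠ 1) :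
    ynum (n - 1) l + (l - 1) * ynum n l =
      (1 / (l ^ (n + 1) * (n.factorial : ℝ))) *
        ∑ j ∈ Finset.range (n + 1), (bernoulli j : ℝ) * (S1 n j : ℝ) := by
  obtain ⟨m, rfl⟩ : ∃ m, n = m + 1 := ⟨n - 1, by omega⟩
  have hl1' : l - 1 ≠ 0 := sub_ne_zero.mpr hl1
  -- RHS sum value
  have hsum : ∑ j ∈ Finset.range (m + 1 + 1), (_root_.bernoulli j : ℝ) * (S1 (m + 1) j : ℝ) =
      (-1) ^ (m + 1) * (m + 1).factorial / (m + 2) := by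
    have h0 := bernoulli_S1_sum (m + 1)
    have h2 : ((∑ k ∈ Finset.range (m + 1 + 1), (_root_.bernoulli k) * (S1 (m + 1) k : ℚ) : ℚ) : ℝ)
        = (((-1) ^ (m + 1) * (m + 1).factorial / (m + 1 + 1) : ℚ) : ℝ) := by
      exact_mod_cast congrArg (fun x : ℚ => (x : ℝ)) h0
    push_cast at h2 ⊢
    convert h2 using 2 <;> push_cast <;> ring
  -- LHS telescoping
  have hlhs : ynum (m + 1 - 1) l + (l - 1) * ynum (m + 1) l =
      (-1) ^ (m + 1) / ((m + 2) * l ^ (m + 2)) := by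
    have hm1 : m + 1 - 1 = m := by omega
    rw [hm1]
    unfold ynum
    rw [Finset.sum_range_succ (n := m + 1), mul_add, Finset.mul_sum, ← add_assoc,
      ← Finset.sum_add_distrib]
    have hz : ∀ j ∈ Finset.range (m + 1),
        (-1 : ℝ) ^ m / ((j + 1) * l ^ (j + 1) * (l - 1) ^ (m + 1 - j)) +
        (l - 1) * ((-1) ^ (m + 1) / ((j + 1) * l ^ (j + 1) * (l - 1) ^ (m + 1 + 1 - j))) = 0 := by
      intro j hj
      rw [Finset.mem_range] at hj
      have he : m + 1 + 1 - j = (m + 1 - j) + 1 := by omega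
      rw [he, pow_succ]
      have hj1 : ((j : ℝ) + 1) ≠ 0 := by positivity
      have hlj : l ^ (j + 1) ≠ 0 := pow_ne_zero _ hl0
      have hlm : (l - 1) ^ (m + 1 - j) ≠ 0 := pow_ne_zero _ hl1'
      field_simp
      ring
    rw [Finset.sum_congr rfl hz, Finset.sum_const_zero, zero_add]
    have : m + 1 + 1 - (m + 1) = 1 := by omega
    rw [this, pow_one]
    have hm2 : ((m : ℝ) + 1 + 1) ≠ 0 := by positivity
    have hlm : l ^ (m + 1 + 1) ≠ 0 := pow_ne_zero _ hl0
    field_simp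
    push_cast
    ring
  rw [hlhs, hsum]
  have hf : ((m + 1).factorial : ℝ) ≠ 0 := by positivity
  have hm2 : ((m : ℝ) + 2) ≠ 0 := by positivity
  have hl : l ^ (m + 1 + 1) ≠ 0 := pow_ne_zero _ hl0
  field_simp
end

section
/- For every nonnegative integer m, 𝓑_m(1/2) = Σ_{n=0}^{m} ((n+1)!/2^{n+1}) · y(n,1/2) · S₂(m,n+1). -/
/-- The Stirling numbers of the second kind,
`S₂(n,k) = (1/k!)·∑_{c=0}^{k} (-1)^{k-c}·C(k,c)·c^n`. -/
def S2 (n k : ℕ) : ℚ :=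
  (1 / (k.factorial : ℚ)) *
    ∑ c ∈ Finset.range (k + 1), (-1 : ℚ) ^ (k - c) * (k.choose c : ℚ) * (c : ℚ) ^ n

/-- The Apostol–Bernoulli numbers `𝓑_n(λ)`: `𝓑_0(λ) = 0` and for `n ≥ 1`,
`𝓑_n(λ) = (n·λ/(λ-1)^n)·∑_{c=0}^{n-1} (-1)^c·c!·λ^{c-1}·(λ-1)^{n-1-c}·S₂(n-1,c)`. -/
noncomputable def apostolBernoulli (n : ℕ) (l : ℝ) : ℝ :=
  if n = 0 then 0
  else ((n : ℝ) * l / (l - 1) ^ n) *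
    ∑ c ∈ Finset.range n, (-1 : ℝ) ^ c * (c.factorial : ℝ) * l ^ ((c : ℤ) - 1) *
      (l - 1) ^ (n - 1 - c) * (S2 (n - 1) c : ℝ)


section Aux

open Finset


def Sur (n k : ℕ) : ℚ :=
  ∑ c ∈ Finset.range (k + 1), (-1 : ℚ) ^ (k - c) * (k.choose c : ℚ) * (c : ℚ) ^ n

lemma neg_one_pow_sub {c k : ℕ} (h : c ≤ k) : ((-1 : ℚ)) ^ (k - c) = (-1) ^ k * (-1) ^ c := by
  have h1 : ((-1 : ℚ)) ^ (k - c) * (-1) ^ c = (-1) ^ k := by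
    rw [← pow_add, Nat.sub_add_cancel h]
  have h2 : ((-1 : ℚ)) ^ c * (-1) ^ c = 1 := by
    rw [← pow_add, ← two_mul, pow_mul]; norm_num
  calc ((-1 : ℚ)) ^ (k - c) = (-1) ^ (k - c) * ((-1) ^ c * (-1) ^ c) := by rw [h2, mul_one]
    _ = (-1) ^ k * (-1) ^ c := by rw [← mul_assoc, h1]

lemma sur_zero (k : ℕ) : Sur 0 k = if k = 0 then 1 else 0 := by
  have := add_pow (1 : ℚ) (-1) k
  simp only [Sur, pow_zero, mul_one]
  rcases Nat.eq_zero_or_pos k with h | h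
  · subst h; simp [Sur]
  · rw [if_neg h.ne']
    have h0 : ((1 : ℚ) + -1) ^ k = 0 := by simp [zero_pow h.ne']
    rw [h0] at this
    rw [this]
    refine Finset.sum_congr rfl fun c hc => ?_
    simp only [one_pow, one_mul]

lemma sur_right_zero (n : ℕ) : Sur n 0 = if n = 0 then 1 else 0 := by
  simp [Sur]
  rcases Nat.eq_zero_or_pos n with h | h
  · simp [h]
  · simp [zero_pow h.ne', if_neg h.ne']

def Shat (n k : ℕ) : ℚ :=
  ∑ d ∈ Finset.range (k + 1), (-1 : ℚ) ^ (k - d) * (k.choose d : ℚ) * ((d : ℚ) + 1) ^ n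

lemma sur_split (n k : ℕ) : Sur n (k + 1) = Shat n k - Sur n k := by
  rw [Sur, Finset.sum_range_succ']
  push_cast
  have h1 : ∀ d ∈ Finset.range (k + 1),
      (-1 : ℚ) ^ (k - d) * ((k + 1).choose (d + 1) : ℚ) * ((d : ℚ) + 1) ^ n
      = (-1 : ℚ) ^ (k - d) * (k.choose d : ℚ) * ((d : ℚ) + 1) ^ n
        + (-1 : ℚ) ^ (k - d) * (k.choose (d + 1) : ℚ) * ((d : ℚ) + 1) ^ n := by
    intro d hd
    rw [Nat.choose_succ_succ]
    push_cast
    ring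
  rw [Finset.sum_congr rfl h1, Finset.sum_add_distrib]
  have h2 : Sur n k = ∑ d ∈ Finset.range k,
      (-1 : ℚ) ^ (k - (d + 1)) * (k.choose (d + 1) : ℚ) * ((d : ℚ) + 1) ^ n
      + (-1 : ℚ) ^ k * (0 : ℚ) ^ n := by
    rw [Sur, Finset.sum_range_succ']
    push_cast
    simp
  have h3 : ∑ d ∈ Finset.range (k + 1), (-1 : ℚ) ^ (k - d) * (k.choose (d + 1) : ℚ) * ((d : ℚ) + 1) ^ n
      = - ∑ d ∈ Finset.range k, (-1 : ℚ) ^ (k - (d + 1)) * (k.choose (d + 1) : ℚ) * ((d : ℚ) + 1) ^ n := by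
    rw [Finset.sum_range_succ, Nat.choose_succ_self]
    push_cast
    rw [← Finset.sum_neg_distrib]
    simp only [mul_zero, zero_mul, add_zero]
    refine Finset.sum_congr rfl fun d hd => ?_
    have hd' : d < k := Finset.mem_range.1 hd
    have : k - d = (k - (d + 1)) + 1 := by omega
    rw [this, pow_succ]
    ring
  rw [h3, h2]
  have : ((-1 : ℚ)) ^ (k + 1 - 0) * ((k + 1).choose 0 : ℚ) * (0 : ℚ) ^ n
      = - ((-1 : ℚ) ^ k * (0 : ℚ) ^ n) := by
    simp [pow_succ]
  rw [Nat.choose_zero_right] at this ⊢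
  push_cast at this ⊢
  rw [Shat]
  ring_nf


lemma sur_succ_eq (n k : ℕ) : Sur (n + 1) (k + 1) = ((k : ℚ) + 1) * Shat n k := by
  rw [Sur, Finset.sum_range_succ', Shat]
  push_cast
  rw [Finset.mul_sum]
  simp only [zero_pow (Nat.succ_ne_zero n), mul_zero, add_zero]
  refine Finset.sum_congr rfl fun d hd => ?_
  have hc : ((k : ℚ) + 1) * (k.choose d : ℚ) = ((k + 1).choose (d + 1) : ℚ) * ((d : ℚ) + 1) := by
    have := Nat.add_one_mul_choose_eq k d
    have h2 : ((k + 1) * k.choose d : ℕ) = ((k + 1).choose (d + 1) * (d + 1) : ℕ) := this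
    exact_mod_cast congrArg (Nat.cast : ℕ → ℚ) h2
  calc (-1 : ℚ) ^ (k - d) * ((k + 1).choose (d + 1) : ℚ) * ((d : ℚ) + 1) ^ (n + 1)
      = (-1 : ℚ) ^ (k - d) * (((k + 1).choose (d + 1) : ℚ) * ((d : ℚ) + 1)) * ((d : ℚ) + 1) ^ n := by
        rw [pow_succ]; ring
    _ = ((k : ℚ) + 1) * ((-1) ^ (k - d) * (k.choose d : ℚ) * ((d : ℚ) + 1) ^ n) := by
        rw [← hc]; ring

lemma sur_rec (n k : ℕ) : Sur (n + 1) (k + 1) = ((k : ℚ) + 1) * (Sur n (k + 1) + Sur n k) := by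
  rw [sur_succ_eq, sur_split]; ring

lemma sur_eq_zero : ∀ n k : ℕ, n < k → Sur n k = 0 := by
  intro n
  induction n with
  | zero => intro k hk; rw [sur_zero, if_neg (by omega)]
  | succ n ih =>
    intro k hk
    obtain ⟨k', rfl⟩ : ∃ k', k = k' + 1 := ⟨k - 1, by omega⟩
    rw [sur_rec, ih (k' + 1) (by omega), ih k' (by omega)]
    ring

lemma sur_conv : ∀ m p q : ℕ,
    ∑ i ∈ Finset.range (m + 1), (m.choose i : ℚ) * Sur i p * Sur (m - i) q = Sur m (p + q) := by
  intro m
  induction m with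
  | zero =>
    intro p q
    rw [Finset.sum_range_one]
    norm_num [sur_zero]
    split_ifs <;> simp_all <;> omega
  | succ m ih =>
    intro p q
    rcases Nat.eq_zero_or_pos p with hp | hp
    · subst hp
      rw [Finset.sum_eq_single 0]
      · simp [sur_right_zero, sur_zero]
      · intro i hi hne
        rw [sur_right_zero, if_neg hne]; ring
      · intro h; simp at h
    rcases Nat.eq_zero_or_pos q with hq | hq
    · subst hq
      rw [Finset.sum_eq_single (m + 1)]
      · simp [sur_right_zero, sur_zero]
      · intro i hi hne
        have : m + 1 - i ≠ 0 := by simp at hi; omega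
        rw [sur_right_zero (m + 1 - i), if_neg this]; ring
      · intro h; simp at h
    obtain ⟨p', rfl⟩ : ∃ p', p = p' + 1 := ⟨p - 1, by omega⟩
    obtain ⟨q', rfl⟩ : ∃ q', q = q' + 1 := ⟨q - 1, by omega⟩
    have key : ∑ i ∈ Finset.range (m + 2),
        ((m + 1).choose i : ℚ) * Sur i (p' + 1) * Sur (m + 1 - i) (q' + 1)
        = (∑ i ∈ Finset.range (m + 1),
            (m.choose i : ℚ) * Sur (i + 1) (p' + 1) * Sur (m - i) (q' + 1))
          + ∑ i ∈ Finset.range (m + 1),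
            (m.choose i : ℚ) * Sur i (p' + 1) * Sur ((m - i) + 1) (q' + 1) := by
      rw [Finset.sum_range_succ']
      have e1 : ∀ i ∈ Finset.range (m + 1),
          ((m + 1).choose (i + 1) : ℚ) * Sur (i + 1) (p' + 1) * Sur (m + 1 - (i + 1)) (q' + 1)
          = (m.choose i : ℚ) * Sur (i + 1) (p' + 1) * Sur (m - i) (q' + 1)
            + (m.choose (i + 1) : ℚ) * Sur (i + 1) (p' + 1) * Sur (m - i) (q' + 1) := by
        intro i hi
        have h2 : m + 1 - (i + 1) = m - i := by omega
        rw [h2, Nat.choose_succ_succ]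
        push_cast
        ring
      rw [Finset.sum_congr rfl e1, Finset.sum_add_distrib]
      have e3 : ∑ i ∈ Finset.range (m + 2),
            (m.choose i : ℚ) * Sur i (p' + 1) * Sur (m + 1 - i) (q' + 1)
          = ∑ i ∈ Finset.range (m + 1),
            (m.choose i : ℚ) * Sur i (p' + 1) * Sur ((m - i) + 1) (q' + 1) := by
        rw [Finset.sum_range_succ, Nat.choose_succ_self]
        push_cast
        rw [zero_mul, zero_mul, add_zero]
        refine Finset.sum_congr rfl fun i hi => ?_
        have : m + 1 - i = (m - i) + 1 := by simp at hi; omega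
        rw [this]
      have e2 : ∑ i ∈ Finset.range (m + 1),
            (m.choose i : ℚ) * Sur i (p' + 1) * Sur ((m - i) + 1) (q' + 1)
          = (∑ i ∈ Finset.range (m + 1),
            (m.choose (i + 1) : ℚ) * Sur (i + 1) (p' + 1) * Sur (m + 1 - (i + 1)) (q' + 1))
            + (m.choose 0 : ℚ) * Sur 0 (p' + 1) * Sur (m + 1 - 0) (q' + 1) := by
        rw [← e3, Finset.sum_range_succ']
      rw [e2]
      have : ∀ i ∈ Finset.range (m + 1),
          (m.choose (i + 1) : ℚ) * Sur (i + 1) (p' + 1) * Sur (m + 1 - (i + 1)) (q' + 1)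
          = (m.choose (i + 1) : ℚ) * Sur (i + 1) (p' + 1) * Sur (m - i) (q' + 1) := by
        intro i hi
        have : m + 1 - (i + 1) = m - i := by omega
        rw [this]
      rw [Finset.sum_congr rfl this]
      simp [Nat.choose_zero_right]
      ring
    rw [key]
    have h1 : ∑ i ∈ Finset.range (m + 1),
        (m.choose i : ℚ) * Sur (i + 1) (p' + 1) * Sur (m - i) (q' + 1)
        = ((p' : ℚ) + 1) * (Sur m ((p' + 1) + (q' + 1)) + Sur m (p' + (q' + 1))) := by
      have : ∀ i ∈ Finset.range (m + 1),
          (m.choose i : ℚ) * Sur (i + 1) (p' + 1) * Sur (m - i) (q' + 1)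
          = ((p' : ℚ) + 1) * ((m.choose i : ℚ) * Sur i (p' + 1) * Sur (m - i) (q' + 1))
            + ((p' : ℚ) + 1) * ((m.choose i : ℚ) * Sur i p' * Sur (m - i) (q' + 1)) := by
        intro i hi
        rw [sur_rec]
        ring
      rw [Finset.sum_congr rfl this, Finset.sum_add_distrib, ← Finset.mul_sum, ← Finset.mul_sum,
        ih (p' + 1) (q' + 1), ih p' (q' + 1), mul_add]
    have h2 : ∑ i ∈ Finset.range (m + 1),
        (m.choose i : ℚ) * Sur i (p' + 1) * Sur ((m - i) + 1) (q' + 1)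
        = ((q' : ℚ) + 1) * (Sur m ((p' + 1) + (q' + 1)) + Sur m ((p' + 1) + q')) := by
      have : ∀ i ∈ Finset.range (m + 1),
          (m.choose i : ℚ) * Sur i (p' + 1) * Sur ((m - i) + 1) (q' + 1)
          = ((q' : ℚ) + 1) * ((m.choose i : ℚ) * Sur i (p' + 1) * Sur (m - i) (q' + 1))
            + ((q' : ℚ) + 1) * ((m.choose i : ℚ) * Sur i (p' + 1) * Sur (m - i) q') := by
        intro i hi
        rw [sur_rec]
        ring
      rw [Finset.sum_congr rfl this, Finset.sum_add_distrib, ← Finset.mul_sum, ← Finset.mul_sum,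
        ih (p' + 1) (q' + 1), ih (p' + 1) q', mul_add]
    rw [h1, h2]
    have hi1 : (p' + 1) + (q' + 1) = (p' + q' + 1) + 1 := by omega
    have hi2 : p' + (q' + 1) = p' + q' + 1 := by omega
    have hi3 : (p' + 1) + q' = p' + q' + 1 := by omega
    rw [hi1, hi2, hi3, sur_rec]
    push_cast
    ring

lemma alt_choose_zero (k : ℕ) (hk : k ≠ 0) :
    ∑ c ∈ Finset.range (k + 1), (-1 : ℚ) ^ c * (k.choose c : ℚ) = 0 := by
  have h := Int.alternating_sum_range_choose_of_ne hk
  have := congrArg (fun z : ℤ => (z : ℚ)) h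
  push_cast at this
  exact this

lemma lemLog (i N : ℕ) (h : i ≤ N) :
    ∑ l ∈ Finset.range (N + 1), (-1 : ℚ) ^ l / ((l : ℚ) + 1) * Sur i (l + 1)
      = if i = 1 then 1 else 0 := by
  have stepA : ∑ l ∈ Finset.range (N + 1), (-1 : ℚ) ^ l / ((l : ℚ) + 1) * Sur i (l + 1)
      = ∑ l ∈ Finset.range (N + 1), ∑ c ∈ Finset.range (l + 2),
          (-1 : ℚ) ^ (c + 1) * (((l + 1).choose c : ℚ) * (c : ℚ) ^ i / ((l : ℚ) + 1)) := by
    refine Finset.sum_congr rfl fun l hl => ?_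
    rw [Sur, Finset.mul_sum]
    refine Finset.sum_congr rfl fun c hc => ?_
    have hc' : c ≤ l + 1 := by simp at hc; omega
    rw [neg_one_pow_sub hc']
    have hll : (-1 : ℚ) ^ l * (-1 : ℚ) ^ (l + 1) = -1 := by
      rw [← pow_add]
      exact Odd.neg_one_pow ⟨l, by ring⟩
    field_simp
    rw [hll]; ring
  rw [stepA]
  rcases Nat.eq_zero_or_pos i with hi | hi
  · subst hi
    rw [if_neg (by omega)]
    refine Finset.sum_eq_zero fun l hl => ?_
    have : ∀ c ∈ Finset.range (l + 2),
        (-1 : ℚ) ^ (c + 1) * (((l + 1).choose c : ℚ) * (c : ℚ) ^ 0 / ((l : ℚ) + 1))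
        = (-(1 / ((l : ℚ) + 1))) * ((-1 : ℚ) ^ c * ((l + 1).choose c : ℚ)) := by
      intro c hc
      rw [pow_zero, pow_succ]
      ring
    rw [Finset.sum_congr rfl this, ← Finset.mul_sum, alt_choose_zero (l + 1) (Nat.succ_ne_zero l),
      mul_zero]
  obtain ⟨i', rfl⟩ : ∃ i', i = i' + 1 := ⟨i - 1, by omega⟩
  have stepB : ∑ l ∈ Finset.range (N + 1), ∑ c ∈ Finset.range (l + 2),
        (-1 : ℚ) ^ (c + 1) * (((l + 1).choose c : ℚ) * (c : ℚ) ^ (i' + 1) / ((l : ℚ) + 1))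
      = ∑ c ∈ Finset.range (N + 2), ∑ l ∈ Finset.Ico (c - 1) (N + 1),
        (-1 : ℚ) ^ (c + 1) * (((l + 1).choose c : ℚ) * (c : ℚ) ^ (i' + 1) / ((l : ℚ) + 1)) := by
    refine Finset.sum_comm' fun l c => ?_
    simp only [Finset.mem_range, Finset.mem_Ico]
    omega
  rw [stepB, Finset.sum_range_succ']
  have c0 : ∑ l ∈ Finset.Ico (0 - 1) (N + 1),
      (-1 : ℚ) ^ (0 + 1) * ((((l + 1).choose 0 : ℕ) : ℚ) * ((0 : ℕ) : ℚ) ^ (i' + 1) / ((l : ℚ) + 1)) = 0 := by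
    refine Finset.sum_eq_zero fun l hl => ?_
    norm_num
  rw [c0, add_zero]
  have stepD : ∀ d ∈ Finset.range (N + 1),
      ∑ l ∈ Finset.Ico (d + 1 - 1) (N + 1),
        (-1 : ℚ) ^ (d + 1 + 1) * ((((l + 1).choose (d + 1) : ℕ) : ℚ) * (((d + 1 : ℕ)) : ℚ) ^ (i' + 1) / ((l : ℚ) + 1))
      = (-1 : ℚ) ^ d * ((d : ℚ) + 1) ^ i' * (((N + 1).choose (d + 1) : ℕ) : ℚ) := by
    intro d hd
    have e1 : ∀ l ∈ Finset.Ico (d + 1 - 1) (N + 1),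
        (-1 : ℚ) ^ (d + 1 + 1) * ((((l + 1).choose (d + 1) : ℕ) : ℚ) * (((d + 1 : ℕ)) : ℚ) ^ (i' + 1) / ((l : ℚ) + 1))
        = (-1 : ℚ) ^ d * ((d : ℚ) + 1) ^ i' * ((l.choose d : ℕ) : ℚ) := by
      intro l hl
      have hcc : ((l : ℚ) + 1) * ((l.choose d : ℕ) : ℚ) = (((l + 1).choose (d + 1) : ℕ) : ℚ) * ((d : ℚ) + 1) := by
        have h2 : ((l + 1) * l.choose d : ℕ) = ((l + 1).choose (d + 1) * (d + 1) : ℕ) :=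
          Nat.add_one_mul_choose_eq l d
        exact_mod_cast congrArg (fun z : ℕ => (z : ℚ)) h2
      have hl1 : ((l : ℚ) + 1) ≠ 0 := by positivity
      have hd1 : ((d : ℚ) + 1) ≠ 0 := by positivity
      have hpow : (-1 : ℚ) ^ (d + 1 + 1) = (-1 : ℚ) ^ d := by
        rw [pow_succ, pow_succ]; ring
      rw [hpow]
      push_cast
      field_simp
      linear_combination (-((d : ℚ) + 1) ^ i') * hcc
    rw [Finset.sum_congr rfl e1, ← Finset.mul_sum]
    congr 1
    have : Finset.Ico (d + 1 - 1) (N + 1) = Finset.Icc d N := by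
      rw [Finset.Ico_add_one_right_eq_Icc]; norm_num
    rw [this, ← Nat.cast_sum]
    exact_mod_cast congrArg (fun z : ℕ => (z : ℚ)) (Nat.sum_Icc_choose N d)
  rw [Finset.sum_congr rfl stepD]
  have hz : Sur i' (N + 1) = 0 := sur_eq_zero i' (N + 1) (by omega)
  rw [Sur, Finset.sum_range_succ'] at hz
  have e2 : ∀ d ∈ Finset.range (N + 1),
      (-1 : ℚ) ^ (N + 1 - (d + 1)) * (((N + 1).choose (d + 1) : ℕ) : ℚ) * (((d + 1 : ℕ)) : ℚ) ^ i'
      = (-1 : ℚ) ^ N * ((-1 : ℚ) ^ d * ((d : ℚ) + 1) ^ i' * (((N + 1).choose (d + 1) : ℕ) : ℚ)) := by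
    intro d hd
    have hdN : d ≤ N := by simp at hd; omega
    have : N + 1 - (d + 1) = N - d := by omega
    rw [this, neg_one_pow_sub hdN]
    push_cast
    ring
  rw [Finset.sum_congr rfl e2, ← Finset.mul_sum] at hz
  simp only [Nat.sub_zero, Nat.choose_zero_right, Nat.cast_one, mul_one] at hz
  have hfac : (-1 : ℚ) ^ N *
      ((∑ d ∈ Finset.range (N + 1),
        (-1 : ℚ) ^ d * ((d : ℚ) + 1) ^ i' * (((N + 1).choose (d + 1) : ℕ) : ℚ)) - (0 : ℚ) ^ i') = 0 := by
    rw [pow_succ] at hz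
    linear_combination hz
  have hNz : ((-1 : ℚ) ^ N) ≠ 0 := pow_ne_zero N (by norm_num)
  have hS : (∑ d ∈ Finset.range (N + 1),
      (-1 : ℚ) ^ d * ((d : ℚ) + 1) ^ i' * (((N + 1).choose (d + 1) : ℕ) : ℚ)) = (0 : ℚ) ^ i' := by
    rcases mul_eq_zero.1 hfac with h' | h'
    · exact absurd h' hNz
    · linarith
  rw [hS]
  rcases Nat.eq_zero_or_pos i' with hi' | hi'
  · subst hi'; norm_num
  · rw [zero_pow (by omega), if_neg (by omega)]

lemma core (m : ℕ) (hm : 1 ≤ m) :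
    ∑ k ∈ Finset.range (m + 2), (∑ j ∈ Finset.range k, (-1 : ℚ) ^ j / ((j : ℚ) + 1)) * Sur m k
      = (m : ℚ) * ∑ c ∈ Finset.range m, Sur (m - 1) c := by
  have step1 : ∑ k ∈ Finset.range (m + 2),
        (∑ j ∈ Finset.range k, (-1 : ℚ) ^ j / ((j : ℚ) + 1)) * Sur m k
      = ∑ k ∈ Finset.range (m + 2), ∑ j ∈ Finset.range k,
        (-1 : ℚ) ^ j / ((j : ℚ) + 1) * Sur m k := by
    refine Finset.sum_congr rfl fun k hk => ?_
    rw [Finset.sum_mul]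
  rw [step1]
  have step2 : ∑ k ∈ Finset.range (m + 2), ∑ j ∈ Finset.range k,
        (-1 : ℚ) ^ j / ((j : ℚ) + 1) * Sur m k
      = ∑ j ∈ Finset.range (m + 1), ∑ k ∈ Finset.Ico (j + 1) (m + 2),
        (-1 : ℚ) ^ j / ((j : ℚ) + 1) * Sur m k := by
    refine Finset.sum_comm' fun k j => ?_
    simp only [Finset.mem_range, Finset.mem_Ico]
    omega
  rw [step2]
  have step3 : ∀ j ∈ Finset.range (m + 1),
      ∑ k ∈ Finset.Ico (j + 1) (m + 2), (-1 : ℚ) ^ j / ((j : ℚ) + 1) * Sur m k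
      = ∑ i ∈ Finset.range (m + 1), (-1 : ℚ) ^ j / ((j : ℚ) + 1) *
          ∑ s ∈ Finset.range (m + 1), (m.choose s : ℚ) * Sur s (j + 1) * Sur (m - s) i := by
    intro j hj
    have hjm : j ≤ m := by simp at hj; omega
    rw [Finset.sum_Ico_eq_sum_range]
    have hsub : m + 2 - (j + 1) = m + 1 - j := by omega
    rw [hsub]
    have e1 : ∀ i ∈ Finset.range (m + 1 - j),
        (-1 : ℚ) ^ j / ((j : ℚ) + 1) * Sur m (j + 1 + i)
        = (-1 : ℚ) ^ j / ((j : ℚ) + 1) *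
            ∑ s ∈ Finset.range (m + 1), (m.choose s : ℚ) * Sur s (j + 1) * Sur (m - s) i := by
      intro i hi
      rw [← sur_conv m (j + 1) i]
    rw [Finset.sum_congr rfl e1]
    refine Finset.sum_subset ?_ ?_
    · intro i hi
      simp at hi ⊢
      omega
    · intro i hi hni
      simp only [Finset.mem_range] at hi hni
      have hbig : m + 1 - j ≤ i := by omega
      have : ∑ s ∈ Finset.range (m + 1), (m.choose s : ℚ) * Sur s (j + 1) * Sur (m - s) i = 0 := by
        refine Finset.sum_eq_zero fun s hs => ?_
        rcases lt_or_ge s (j + 1) with hcase | hcase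
        · rw [sur_eq_zero s (j + 1) hcase]; ring
        · rw [sur_eq_zero (m - s) i (by omega)]; ring
      rw [this, mul_zero]
  rw [Finset.sum_congr rfl step3]
  have step4 : ∀ j ∈ Finset.range (m + 1),
      ∑ i ∈ Finset.range (m + 1), (-1 : ℚ) ^ j / ((j : ℚ) + 1) *
          ∑ s ∈ Finset.range (m + 1), (m.choose s : ℚ) * Sur s (j + 1) * Sur (m - s) i
      = ∑ s ∈ Finset.range (m + 1), (m.choose s : ℚ) *
          ((-1 : ℚ) ^ j / ((j : ℚ) + 1) * Sur s (j + 1)) *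
          ∑ i ∈ Finset.range (m + 1), Sur (m - s) i := by
    intro j hj
    have d1 : ∀ i ∈ Finset.range (m + 1),
        (-1 : ℚ) ^ j / ((j : ℚ) + 1) *
          ∑ s ∈ Finset.range (m + 1), (m.choose s : ℚ) * Sur s (j + 1) * Sur (m - s) i
        = ∑ s ∈ Finset.range (m + 1),
            (-1 : ℚ) ^ j / ((j : ℚ) + 1) * ((m.choose s : ℚ) * Sur s (j + 1) * Sur (m - s) i) := by
      intro i hi
      rw [Finset.mul_sum]
    rw [Finset.sum_congr rfl d1, Finset.sum_comm]
    refine Finset.sum_congr rfl fun s hs => ?_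
    rw [Finset.mul_sum]
    refine Finset.sum_congr rfl fun i hi => ?_
    ring
  rw [Finset.sum_congr rfl step4, Finset.sum_comm]
  have step5 : ∀ s ∈ Finset.range (m + 1),
      ∑ j ∈ Finset.range (m + 1), (m.choose s : ℚ) *
          ((-1 : ℚ) ^ j / ((j : ℚ) + 1) * Sur s (j + 1)) *
          ∑ i ∈ Finset.range (m + 1), Sur (m - s) i
      = (m.choose s : ℚ) * (if s = 1 then 1 else 0) * ∑ i ∈ Finset.range (m + 1), Sur (m - s) i := by
    intro s hs
    have hsm : s ≤ m := by simp at hs; omega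
    rw [← lemLog s m hsm]
    simp only [Finset.sum_mul, Finset.mul_sum]
    rw [Finset.sum_comm]
  rw [Finset.sum_congr rfl step5]
  rw [Finset.sum_eq_single 1]
  · rw [if_pos rfl, Nat.choose_one_right, mul_one]
    have : ∑ i ∈ Finset.range (m + 1), Sur (m - 1) i
        = ∑ i ∈ Finset.range m, Sur (m - 1) i := by
      rw [Finset.sum_range_succ, sur_eq_zero (m - 1) m (by omega), add_zero]
    rw [this]
  · intro s hs hne
    rw [if_neg hne]
    ring
  · intro hnot
    exact absurd (Finset.mem_range.2 (by omega)) hnot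


lemma neg_one_pow_subR {c k : ℕ} (h : c ≤ k) : ((-1 : ℝ)) ^ (k - c) = (-1) ^ k * (-1) ^ c := by
  have h1 : ((-1 : ℝ)) ^ (k - c) * (-1) ^ c = (-1) ^ k := by
    rw [← pow_add, Nat.sub_add_cancel h]
  have h2 : ((-1 : ℝ)) ^ c * (-1) ^ c = 1 := by
    rw [← pow_add, ← two_mul, pow_mul]; norm_num
  calc ((-1 : ℝ)) ^ (k - c) = (-1) ^ (k - c) * ((-1) ^ c * (-1) ^ c) := by rw [h2, mul_one]
    _ = (-1) ^ k * (-1) ^ c := by rw [← mul_assoc, h1]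

lemma fact_mul_S2 (n k : ℕ) : (k.factorial : ℚ) * S2 n k = Sur n k := by
  rw [S2, Sur, one_div, ← mul_assoc, mul_inv_cancel₀ (by exact_mod_cast k.factorial_ne_zero),
    one_mul]

lemma ynum_half (n : ℕ) : ynum n (1 / 2)
    = -((2 : ℝ) ^ (n + 2)) * ∑ j ∈ Finset.range (n + 1), (-1 : ℝ) ^ j / ((j : ℝ) + 1) := by
  rw [ynum, Finset.mul_sum]
  refine Finset.sum_congr rfl fun j hj => ?_
  have hj' : j ≤ n := by simp at hj; omega
  obtain ⟨d, hd⟩ : ∃ d, n = j + d := ⟨n - j, by omega⟩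
  have h2 : n + 1 - j = d + 1 := by omega
  have h1 : ((1 : ℝ) / 2 - 1) = -(1 / 2) := by norm_num
  rw [h1, h2, hd]
  have hne1 : ((j : ℝ) + 1) ≠ 0 := by positivity
  have hne2 : ((1 : ℝ) / 2) ^ (j + 1) ≠ 0 := by positivity
  have hne3 : (-(1 / 2) : ℝ) ^ (d + 1) ≠ 0 := by
    apply pow_ne_zero; norm_num
  have h4 : (-(1/2) : ℝ) ^ (d + 1) = (-1) ^ (d + 1) * (1/2) ^ (d + 1) := by
    rw [← neg_one_mul, mul_pow]
  rw [h4, one_div, inv_pow, inv_pow]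
  field_simp
  ring

lemma ab_half (M : ℕ) : apostolBernoulli (M + 1) (1 / 2)
    = -2 * ((M : ℝ) + 1) * ((∑ c ∈ Finset.range (M + 1), Sur M c : ℚ) : ℝ) := by
  rw [apostolBernoulli, if_neg (Nat.succ_ne_zero M)]
  have h1 : ((1 : ℝ) / 2 - 1) = -(1 / 2) := by norm_num
  simp only [Nat.add_sub_cancel, h1]
  have e : ∀ c ∈ Finset.range (M + 1),
      (-1 : ℝ) ^ c * (c.factorial : ℝ) * ((1 : ℝ)/2) ^ ((c : ℤ) - 1) * (-(1/2) : ℝ) ^ (M - c) *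
        (S2 M c : ℝ)
      = (-1 : ℝ) ^ M * ((1 : ℝ)/2) ^ M * 2 * ((Sur M c : ℚ) : ℝ) := by
    intro c hc
    have hc' : c ≤ M := by simp at hc; omega
    obtain ⟨d, hd⟩ : ∃ d, M = c + d := ⟨M - c, by omega⟩
    have h2 : M - c = d := by omega
    have h3 : ((1 : ℝ)/2) ^ ((c : ℤ) - 1) = ((1 : ℝ)/2) ^ c * 2 := by
      rw [zpow_sub₀ (by norm_num : ((1 : ℝ)/2) ≠ 0), zpow_natCast, zpow_one]
      field_simp
    have h4 : (-(1/2) : ℝ) ^ d = (-1 : ℝ) ^ d * ((1 : ℝ)/2) ^ d := by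
      rw [← neg_one_mul, mul_pow]
    have h5 : (c.factorial : ℝ) * (S2 M c : ℝ) = ((Sur M c : ℚ) : ℝ) := by
      have := congrArg (fun z : ℚ => (z : ℝ)) (fact_mul_S2 M c)
      push_cast at this
      exact_mod_cast this
    rw [h2, h3, h4]
    subst hd
    calc (-1 : ℝ) ^ c * (c.factorial : ℝ) * (((1 : ℝ)/2) ^ c * 2) *
          ((-1 : ℝ) ^ d * ((1 : ℝ)/2) ^ d) * (S2 (c + d) c : ℝ)
        = (-1 : ℝ) ^ (c + d) * ((1 : ℝ)/2) ^ (c + d) * 2 *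
            ((c.factorial : ℝ) * (S2 (c + d) c : ℝ)) := by
          rw [pow_add, pow_add]; ring
      _ = (-1 : ℝ) ^ (c + d) * ((1 : ℝ)/2) ^ (c + d) * 2 * ((Sur (c + d) c : ℚ) : ℝ) := by
          rw [h5]
  rw [Finset.sum_congr rfl e, ← Finset.mul_sum]
  have hcast : ∑ c ∈ Finset.range (M + 1), ((Sur M c : ℚ) : ℝ)
      = ((∑ c ∈ Finset.range (M + 1), Sur M c : ℚ) : ℝ) := by
    push_cast
    rfl
  rw [hcast]
  have hdenom : (-(1/2) : ℝ) ^ (M + 1) = ((-1 : ℝ) ^ M * ((1 : ℝ)/2) ^ M) * (-(1/2)) := by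
    rw [pow_succ, ← neg_one_mul, mul_pow]
  rw [hdenom]
  have hne : ((-1 : ℝ) ^ M * ((1 : ℝ)/2) ^ M) * (-(1/2)) ≠ 0 := by
    apply mul_ne_zero
    · apply mul_ne_zero (pow_ne_zero _ (by norm_num)) (pow_ne_zero _ (by norm_num))
    · norm_num
  rw [div_mul_eq_mul_div, div_eq_iff hne]
  push_cast
  ring_nf


end Aux

theorem stmt_13 (m : ℕ) :
    apostolBernoulli m (1 / 2) =
      ∑ n ∈ Finset.range (m + 1),
        (((n + 1).factorial : ℝ) / 2 ^ (n + 1)) * ynum n (1 / 2) * (S2 m (n + 1) : ℝ) := by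
  rcases m with _ | M
  · rw [apostolBernoulli, if_pos rfl, Finset.sum_range_one]
    have hS : S2 0 1 = 0 := by
      rw [S2]
      norm_num [Finset.sum_range_succ]
    rw [hS]
    norm_num
  · rw [ab_half M]
    have eR : ∀ n ∈ Finset.range (M + 2),
        (((n + 1).factorial : ℝ) / 2 ^ (n + 1)) * ynum n (1 / 2) * (S2 (M + 1) (n + 1) : ℝ)
        = ((-2 * ((∑ j ∈ Finset.range (n + 1), (-1 : ℚ) ^ j / ((j : ℚ) + 1)) *
            Sur (M + 1) (n + 1)) : ℚ) : ℝ) := by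
      intro n hn
      rw [ynum_half n]
      have hS : ∑ j ∈ Finset.range (n + 1), (-1 : ℝ) ^ j / ((j : ℝ) + 1)
          = (((∑ j ∈ Finset.range (n + 1), (-1 : ℚ) ^ j / ((j : ℚ) + 1)) : ℚ) : ℝ) := by
        push_cast
        rfl
      have hfS : (((n + 1).factorial : ℝ)) * (S2 (M + 1) (n + 1) : ℝ)
          = ((Sur (M + 1) (n + 1) : ℚ) : ℝ) := by
        have := congrArg (fun z : ℚ => (z : ℝ)) (fact_mul_S2 (M + 1) (n + 1))
        push_cast at this
        exact_mod_cast this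
      have h2 : ((2 : ℝ) ^ (n + 2)) = 2 * 2 ^ (n + 1) := by
        rw [pow_succ]; ring
      have hne : ((2 : ℝ) ^ (n + 1)) ≠ 0 := by positivity
      rw [hS, h2]
      push_cast
      rw [← hfS]
      push_cast
      field_simp
    rw [Finset.sum_congr rfl eR]
    have hcast : ∑ n ∈ Finset.range (M + 2),
        ((-2 * ((∑ j ∈ Finset.range (n + 1), (-1 : ℚ) ^ j / ((j : ℚ) + 1)) *
            Sur (M + 1) (n + 1)) : ℚ) : ℝ)
        = ((∑ n ∈ Finset.range (M + 2), -2 * ((∑ j ∈ Finset.range (n + 1),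
            (-1 : ℚ) ^ j / ((j : ℚ) + 1)) * Sur (M + 1) (n + 1)) : ℚ) : ℝ) := by
      push_cast
      rfl
    rw [hcast]
    have hshift : ∑ n ∈ Finset.range (M + 2), -2 * ((∑ j ∈ Finset.range (n + 1),
          (-1 : ℚ) ^ j / ((j : ℚ) + 1)) * Sur (M + 1) (n + 1))
        = -2 * ∑ k ∈ Finset.range (M + 3), (∑ j ∈ Finset.range k,
            (-1 : ℚ) ^ j / ((j : ℚ) + 1)) * Sur (M + 1) k := by
      rw [Finset.mul_sum, Finset.sum_range_succ' (fun k => -2 * ((∑ j ∈ Finset.range k,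
        (-1 : ℚ) ^ j / ((j : ℚ) + 1)) * Sur (M + 1) k)) (M + 2)]
      simp
    rw [hshift]
    have hcore := core (M + 1) (by omega)
    have : (M + 1 : ℕ) + 2 = M + 3 := rfl
    rw [this] at hcore
    rw [hcore]
    have : (M + 1 : ℕ) - 1 = M := rfl
    rw [this]
    push_cast
    ring
end
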